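/- Let A be a commutative ℚ-algebra and let a : ℕ → A with a(0) = 0. Let f be the formal power series ∑_{k≥1} a(k) Xᵏ. Then for every n ∈ ℕ, the coefficient of Xⁿ in exp(f) := ∑_{m≥0} (1/m!)·f^m (a finite sum in each degree, since f has zero constant term, so only m ≤ n contribute) equals ∑_{λ} ∏_{s} (1/k_s(λ)!)·a(s)^{k_s(λ)}, where λ runs over the partitions of n and k_s(λ) denotes the multiplicity of the part s in λ. -/

import Mathlib

open PowerSeries Finset

private lemma multiset_fact_prod_mul_multinomial (μ : Multiset ℕ) :
    (∏ s ∈ μ.toFinset, (μ.count s).factorial) * μ.countPerms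
      = (Multiset.card μ).factorial := by
  classical
  have h := Nat.multinomial_spec μ.toFinset μ.toFinsupp
  simp only [Multiset.toFinsupp_apply] at h
  rw [Multiset.toFinset_sum_count_eq] at h
  rw [Multiset.countPerms, Finsupp.multinomial_eq]
  rw [Multiset.toFinsupp_support]
  exact h

private lemma rat_multinomial_eq (μ : Multiset ℕ) :
    ((Multiset.card μ).factorial : ℚ)⁻¹ * (μ.countPerms : ℚ)
      = ∏ s ∈ μ.toFinset, (((μ.count s).factorial : ℚ))⁻¹ := by
  have h := multiset_fact_prod_mul_multinomial μ
  have h2 : ((∏ s ∈ μ.toFinset, (μ.count s).factorial : ℕ) : ℚ) * (μ.countPerms : ℚ)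
      = ((Multiset.card μ).factorial : ℚ) := by exact_mod_cast congrArg (Nat.cast : ℕ → ℚ) h
  have hfac : ((Multiset.card μ).factorial : ℚ) ≠ 0 := by
    exact_mod_cast (Nat.factorial_pos _).ne'
  have hprod : ((∏ s ∈ μ.toFinset, (μ.count s).factorial : ℕ) : ℚ) ≠ 0 := by
    exact_mod_cast (Finset.prod_pos (fun s _ => Nat.factorial_pos _)).ne'
  rw [Finset.prod_inv_distrib, ← Nat.cast_prod, inv_mul_eq_iff_eq_mul₀ hfac,
    eq_mul_inv_iff_mul_eq₀ hprod]
  linarith [h2]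

private lemma key_algebra (A : Type*) [CommRing A] [Algebra ℚ A] (a : ℕ → A)
    (μ : Multiset ℕ) :
    ((Multiset.card μ).factorial : ℚ)⁻¹ • ((μ.countPerms : A) * (μ.map a).prod)
      = ∏ s ∈ μ.toFinset, (((μ.count s).factorial : ℚ)⁻¹) • a s ^ (μ.count s) := by
  rw [Finset.prod_multiset_map_count]
  simp only [Algebra.smul_def]
  rw [Finset.prod_mul_distrib, ← map_prod]
  have hcast : (μ.countPerms : A) = algebraMap ℚ A (μ.countPerms : ℚ) := by simp
  rw [hcast, ← mul_assoc, ← map_mul, rat_multinomial_eq]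

private lemma monomial_mul_monomial' {A : Type*} [CommRing A] (i j : ℕ) (x y : A) :
    (PowerSeries.monomial (R := A) i) x * (PowerSeries.monomial (R := A) j) y
      = (PowerSeries.monomial (R := A) (i + j)) (x * y) := by
  have := MvPowerSeries.monomial_mul_monomial (Finsupp.single (default : Unit) i)
    (Finsupp.single (default : Unit) j) x y
  rw [← Finsupp.single_add] at this
  exact this

private lemma prod_map_monomial (A : Type*) [CommRing A] (a : ℕ → A) (μ : Multiset ℕ) :
    (μ.map (fun k => (PowerSeries.monomial (R := A) k) (a k))).prod
      = (PowerSeries.monomial (R := A) μ.sum) ((μ.map a).prod) := by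
  induction μ using Multiset.induction_on with
  | empty => simp [PowerSeries.monomial_zero_eq_C_apply]
  | cons k μ ih => simp [ih, monomial_mul_monomial']

/-- For a formal power series `f = ∑_{k≥1} a k • Xᵏ` with zero constant term over a
commutative `ℚ`-algebra, the coefficient of `Xⁿ` in `exp f = ∑_m (1/m!) • f^m`
(where only `m ≤ n` contribute in degree `n`) equals
`∑_{λ ⊢ n} ∏_s (1/k_s(λ)!) • (a s)^{k_s(λ)}`, the sum running over partitions `λ` of `n`
and `k_s(λ)` denoting the multiplicity of the part `s` in `λ`. -/
theorem coeff_exp_eq_sum_over_partitions (A : Type*) [CommRing A] [Algebra ℚ A]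
    (a : ℕ → A) (ha : a 0 = 0) (n : ℕ) :
    PowerSeries.coeff (R := A) n
        (∑ m ∈ Finset.range (n + 1),
          ((m.factorial : ℚ)⁻¹) • (PowerSeries.mk a) ^ m)
      = ∑ p : Nat.Partition n, ∏ s ∈ p.parts.toFinset,
          (((p.parts.count s).factorial : ℚ)⁻¹) • (a s) ^ (p.parts.count s) := by
  classical
  set g : PowerSeries A := ∑ k ∈ Finset.range (n + 1), (PowerSeries.monomial (R := A) k) (a k) with hg
  have hcoeffg : ∀ j ≤ n, PowerSeries.coeff (R := A) j g = a j := by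
    intro j hj
    rw [hg, map_sum]
    simp only [PowerSeries.coeff_monomial]
    rw [Finset.sum_ite_eq]
    simp [Nat.lt_succ_of_le hj]
  -- replace `mk a` by the finite sum `g` in degree `n`
  have hpow : ∀ m, PowerSeries.coeff (R := A) n ((PowerSeries.mk a) ^ m)
      = PowerSeries.coeff (R := A) n (g ^ m) := by
    intro m
    rw [PowerSeries.coeff_pow, PowerSeries.coeff_pow]
    refine Finset.sum_congr rfl fun l hl => Finset.prod_congr rfl fun i hi => ?_
    rw [Finset.mem_finsuppAntidiag] at hl
    have hli : l i ≤ n := by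
      rw [← hl.1]
      exact Finset.single_le_sum (fun j _ => Nat.zero_le _) hi
    rw [PowerSeries.coeff_mk, hcoeffg _ hli]
  -- compute the coefficient of `g ^ m` via the multinomial theorem
  have hgm : ∀ m, PowerSeries.coeff (R := A) n (g ^ m)
      = ∑ k ∈ (Finset.range (n + 1)).sym m,
          (((k : Multiset ℕ).countPerms : A) *
            (if n = (k : Multiset ℕ).sum then ((k : Multiset ℕ).map a).prod else 0)) := by
    intro m
    have hsp : g ^ m = ∑ k ∈ (Finset.range (n + 1)).sym m,
        (((k : Multiset ℕ).countPerms : A⟦X⟧) *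
          ((k : Multiset ℕ).map (fun j => (PowerSeries.monomial (R := A) j) (a j))).prod) :=
      Finset.sum_pow _ m
    rw [hsp, map_sum]
    refine Finset.sum_congr rfl fun k _ => ?_
    rw [prod_map_monomial, ← nsmul_eq_mul, map_nsmul, PowerSeries.coeff_monomial,
      nsmul_eq_mul]
  -- the summand as a function on the sigma type
  set F : (Σ _ : ℕ, Sym ℕ _) → A := fun x =>
    ((x.1.factorial : ℚ)⁻¹) • (((x.2 : Multiset ℕ).countPerms : A) *
      (if n = (x.2 : Multiset ℕ).sum then ((x.2 : Multiset ℕ).map a).prod else 0)) with hF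
  have hLHS : PowerSeries.coeff (R := A) n
        (∑ m ∈ Finset.range (n + 1),
          ((m.factorial : ℚ)⁻¹) • (PowerSeries.mk a) ^ m)
      = ∑ x ∈ (Finset.range (n + 1)).sigma (fun m => (Finset.range (n + 1)).sym m), F x := by
    rw [map_sum, Finset.sum_sigma]
    refine Finset.sum_congr rfl fun m _ => ?_
    rw [PowerSeries.coeff_smul, hpow, hgm, Finset.smul_sum]
  rw [hLHS]
  -- nonvanishing terms determine partitions of n
  have hvanish : ∀ x : (Σ _ : ℕ, Sym ℕ _), F x ≠ 0 →
      (x.2 : Multiset ℕ).sum = n ∧ ∀ i ∈ (x.2 : Multiset ℕ), 0 < i := by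
    intro x hx
    constructor
    · by_contra h
      apply hx
      rw [hF]
      simp only [if_neg (fun hh : n = (x.2 : Multiset ℕ).sum => h hh.symm)]
      simp
    · intro i hi
      rcases Nat.eq_zero_or_pos i with rfl | h
      · exfalso
        apply hx
        have h0 : ((x.2 : Multiset ℕ).map a).prod = 0 :=
          Multiset.prod_eq_zero (ha ▸ Multiset.mem_map_of_mem a hi)
        rw [hF]
        simp only [h0, ite_self, mul_zero, smul_zero]
      · exact h
  -- the common value on nonvanishing terms
  have hcomp : ∀ (x : (Σ _ : ℕ, Sym ℕ _)), (x.2 : Multiset ℕ).sum = n →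
      F x = ∏ s ∈ (x.2 : Multiset ℕ).toFinset,
        ((((x.2 : Multiset ℕ).count s).factorial : ℚ)⁻¹) • a s ^ ((x.2 : Multiset ℕ).count s) := by
    rintro ⟨m, μ', hcard⟩ hsum
    subst hcard
    rw [hF]
    simp only [if_pos hsum.symm]
    exact key_algebra A a _
  refine Finset.sum_bij_ne_zero
    (fun x _ h₂ => ⟨(x.2 : Multiset ℕ), fun {i} hi => (hvanish x h₂).2 i hi, (hvanish x h₂).1⟩)
    (fun _ _ _ => Finset.mem_univ _) ?_ ?_ ?_
  · rintro ⟨m₁, μ₁, hc₁⟩ h₁₁ h₁₂ ⟨m₂, μ₂, hc₂⟩ h₂₁ h₂₂ heq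
    have hμ : μ₁ = μ₂ := congrArg Nat.Partition.parts heq
    subst hμ
    have : m₁ = m₂ := hc₁.symm.trans hc₂
    subst this
    rfl
  · intro p _ hp
    refine ⟨⟨Multiset.card p.parts, ⟨p.parts, rfl⟩⟩, ?_, ?_, ?_⟩
    · rw [Finset.mem_sigma]
      constructor
      · rw [Finset.mem_range, Nat.lt_succ_iff]
        calc Multiset.card p.parts = Multiset.card p.parts • 1 := by simp
          _ ≤ p.parts.sum := Multiset.card_nsmul_le_sum (fun x hx => p.parts_pos hx)
          _ = n := p.parts_sum
      · rw [Finset.mem_sym_iff]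
        intro j hj
        rw [Finset.mem_range, Nat.lt_succ_iff]
        calc j ≤ p.parts.sum := Multiset.single_le_sum (fun x _ => Nat.zero_le x) j hj
          _ = n := p.parts_sum
    · rw [hcomp ⟨Multiset.card p.parts, ⟨p.parts, rfl⟩⟩ p.parts_sum]
      exact hp
    · exact Nat.Partition.ext rfl
  · intro x h₁ h₂
    exact hcomp x (hvanish x h₂).1
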